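/- arXiv:2002.00494 — 3 statements merged into one kernel-verified Lean document; each statement's English description precedes it below -/
import Mathlib

section
/- Let G be a subgroup of GL_2(C) such that det(L - Id) = 0 for every L ∈ G. Then G is solvable. -/
open Matrix

/-- Two matrices in the "unipotent" kernel commute. -/
lemma key_comm (A B : Matrix (Fin 2) (Fin 2) ℂ)
    (hA1 : A.det = 1) (hB1 : B.det = 1)
    (hA : (A - 1).det = 0) (hB : (B - 1).det = 0)
    (hAB : (A * B - 1).det = 0) : A * B = B * A := by
  simp only [Matrix.det_fin_two, Matrix.sub_apply, Matrix.mul_apply,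
    Fin.sum_univ_two, Matrix.one_apply, if_true, if_pos, if_neg,
    Fin.zero_eq_one_iff, Fin.one_eq_zero_iff, Ne, OfNat.ofNat_ne_one,
    not_false_iff, ite_true, ite_false, eq_self_iff_true] at hA1 hB1 hA hB hAB
  set a := A 0 0; set b := A 0 1; set c := A 1 0; set d := A 1 1
  set e := B 0 0; set f := B 0 1; set g := B 1 0; set hh := B 1 1
  -- trace conditions
  have tA : a + d = 2 := by linear_combination hA1 - hA
  have tB : e + hh = 2 := by linear_combination hB1 - hB
  have tAB : a*e + b*g + c*f + d*hh = 2 := by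
    linear_combination -hAB + (e*hh - f*g) * hA1 + hB1
  -- reduced hypotheses
  have H1 : (a-1)^2 + b*c = 0 := by linear_combination (a-1) * tA - hA
  have H2 : (e-1)^2 + f*g = 0 := by linear_combination (e-1) * tB - hB
  have H3 : 2*(a-1)*(e-1) + b*g + c*f = 0 := by
    linear_combination tAB + (a - 2) * tB - hh * tA
  have s1 : b*g - c*f = 0 := by
    have : (b*g - c*f)^2 = 0 := by
      linear_combination (b*g + c*f - 2*(a-1)*(e-1)) * H3 + 4*(a-1)^2 * H2 - 4*f*g * H1
    exact pow_eq_zero_iff two_ne_zero |>.mp this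
  have s2 : (a-1)*f - (e-1)*b = 0 := by
    have : ((a-1)*f - (e-1)*b)^2 = 0 := by
      linear_combination f^2 * H1 + b^2 * H2 - b*f * H3
    exact pow_eq_zero_iff two_ne_zero |>.mp this
  have s3 : (e-1)*c - (a-1)*g = 0 := by
    have : ((e-1)*c - (a-1)*g)^2 = 0 := by
      linear_combination g^2 * H1 + c^2 * H2 - c*g * H3
    exact pow_eq_zero_iff two_ne_zero |>.mp this
  ext i j
  fin_cases i <;> fin_cases j <;>
    simp only [Matrix.mul_apply, Fin.sum_univ_two, Fin.mk_zero, Fin.mk_one, Fin.isValue]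
  · linear_combination s1
  · linear_combination 2 * s2 + b * tB - f * tA
  · linear_combination 2 * s3 + g * tA - c * tB
  · linear_combination -s1

/-- A subgroup of `GL₂(ℂ)` all of whose elements `L` satisfy `det (L - Id) = 0`
is solvable. -/
theorem solvable_of_det_sub_one_eq_zero
    (G : Subgroup (Matrix.GeneralLinearGroup (Fin 2) ℂ))
    (h : ∀ g ∈ G, ((g : Matrix (Fin 2) (Fin 2) ℂ) - 1).det = 0) :
    IsSolvable G := by
  let φ : ↥G →* ℂˣ := (Matrix.GeneralLinearGroup.det).comp G.subtype
  have hker : ∀ x y : ↥φ.ker, x * y = y * x := by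
    rintro ⟨x, hx⟩ ⟨y, hy⟩
    have hx' : ((x : Matrix.GeneralLinearGroup (Fin 2) ℂ) : Matrix (Fin 2) (Fin 2) ℂ).det = 1 := by
      have := hx
      simp only [MonoidHom.mem_ker, φ, MonoidHom.comp_apply] at this
      have := congrArg Units.val this
      simpa using this
    have hy' : ((y : Matrix.GeneralLinearGroup (Fin 2) ℂ) : Matrix (Fin 2) (Fin 2) ℂ).det = 1 := by
      have := hy
      simp only [MonoidHom.mem_ker, φ, MonoidHom.comp_apply] at this
      have := congrArg Units.val this
      simpa using this
    have hcomm := key_comm _ _ hx' hy' (h _ x.2) (h _ y.2)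
      (by simpa using h _ (mul_mem x.2 y.2))
    ext
    exact congrFun (congrFun hcomm _) _
  haveI : IsSolvable ↥φ.ker := by
    haveI : Std.Commutative (α := ↥φ.ker) (· * ·) := ⟨hker⟩
    exact isSolvable_of_comm hker
  exact solvable_of_ker_le_range φ.ker.subtype φ (by simp) (hG' := this)
end

section
/- Let Λ be a lattice in C^2 and let Γ be a group of automorphisms of the torus A = C^2/Λ, each induced by an affine map z ↦ L(g)(z) + T(g) with L(g)(Λ) = Λ. If the action of Γ on A is free (every non-identity element has no fixed point), then Γ is solvable. -/
private lemma key_scalar (p q r s t u v w : ℂ)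
    (h1 : p * s - q * r = 1) (h2 : (p - 1) * (s - 1) - q * r = 0)
    (h3 : t * w - u * v = 1) (h4 : (t - 1) * (w - 1) - u * v = 0)
    (h5 : ((p * t + q * v) - 1) * ((r * u + s * w) - 1) - (p * u + q * w) * (r * t + s * v) = 0) :
    p * t + q * v = t * p + u * r ∧ p * u + q * w = t * q + u * s ∧
      r * t + s * v = v * p + w * r ∧ r * u + s * w = v * q + w * s := by
  have hs2 : s = 2 - p := by linear_combination h1 - h2
  have hw2 : w = 2 - t := by linear_combination h3 - h4
  subst hs2 hw2
  have ha : (p - 1) ^ 2 + q * r = 0 := by linear_combination -h2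
  have hd : (t - 1) ^ 2 + u * v = 0 := by linear_combination -h4
  have hdetAB : (p * t + q * v) * (r * u + (2 - p) * (2 - t)) -
      (p * u + q * (2 - t)) * (r * t + (2 - p) * v) = 1 := by
    linear_combination (p * (2 - p) - q * r) * h3 + h1
  have htr : 2 * (p - 1) * (t - 1) + q * v + r * u = 0 := by
    linear_combination hdetAB - h5
  have hST : ((p - 1) * (t - 1) + q * v) * ((p - 1) * (t - 1) + r * u) = 0 := by
    linear_combination (-(t - 1) ^ 2) * ha + (q * r) * hd + ((p - 1) * (t - 1)) * htr
  have hSS : ((p - 1) * (t - 1) + q * v) * ((p - 1) * (t - 1) + q * v) = 0 := by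
    linear_combination ((p - 1) * (t - 1) + q * v) * htr - hST
  have hS : (p - 1) * (t - 1) + q * v = 0 := mul_self_eq_zero.mp hSS
  have hT0 : (p - 1) * (t - 1) + r * u = 0 := by linear_combination htr - hS
  -- X := (p-1)*u - q*(t-1)
  have hax : (p - 1) * ((p - 1) * u - q * (t - 1)) = 0 := by
    linear_combination u * ha - q * hT0
  have hdx : (t - 1) * ((p - 1) * u - q * (t - 1)) = 0 := by
    linear_combination u * hS - q * hd
  have hX : (p - 1) * u - q * (t - 1) = 0 := by
    rcases mul_eq_zero.mp hax with hp | h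
    · rcases mul_eq_zero.mp hdx with ht1 | h
      · rw [hp, ht1]; ring
      · exact h
    · exact h
  -- Y := r*(t-1) - (p-1)*v
  have haY : (p - 1) * (r * (t - 1) - (p - 1) * v) = 0 := by
    linear_combination r * hS - v * ha
  have hdY : (t - 1) * (r * (t - 1) - (p - 1) * v) = 0 := by
    linear_combination -v * hT0 + r * hd
  have hY : r * (t - 1) - (p - 1) * v = 0 := by
    rcases mul_eq_zero.mp haY with hp | h
    · rcases mul_eq_zero.mp hdY with ht1 | h
      · rw [hp, ht1]; ring
      · exact h
    · exact h
  refine ⟨by linear_combination hS - hT0, by linear_combination 2 * hX,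
    by linear_combination 2 * hY, by linear_combination hT0 - hS⟩


private lemma mat_comm (A B : Matrix (Fin 2) (Fin 2) ℂ)
    (h1 : A.det = 1) (h2 : (A - 1).det = 0)
    (h3 : B.det = 1) (h4 : (B - 1).det = 0)
    (h5 : (A * B - 1).det = 0) : A * B = B * A := by
  have e1 : A 0 0 * A 1 1 - A 0 1 * A 1 0 = 1 := by
    rw [← Matrix.det_fin_two]; exact h1
  have e2 : (A 0 0 - 1) * (A 1 1 - 1) - A 0 1 * A 1 0 = 0 := by
    rw [Matrix.det_fin_two] at h2
    simp only [Matrix.sub_apply, Matrix.one_apply] at h2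
    norm_num at h2
    linear_combination h2
  have e3 : B 0 0 * B 1 1 - B 0 1 * B 1 0 = 1 := by
    rw [← Matrix.det_fin_two]; exact h3
  have e4 : (B 0 0 - 1) * (B 1 1 - 1) - B 0 1 * B 1 0 = 0 := by
    rw [Matrix.det_fin_two] at h4
    simp only [Matrix.sub_apply, Matrix.one_apply] at h4
    norm_num at h4
    linear_combination h4
  have e5 : ((A 0 0 * B 0 0 + A 0 1 * B 1 0) - 1) * ((A 1 0 * B 0 1 + A 1 1 * B 1 1) - 1) -
      (A 0 0 * B 0 1 + A 0 1 * B 1 1) * (A 1 0 * B 0 0 + A 1 1 * B 1 0) = 0 := by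
    rw [Matrix.det_fin_two] at h5
    simp only [Matrix.sub_apply, Matrix.one_apply, Matrix.mul_apply, Fin.sum_univ_two] at h5
    norm_num at h5
    linear_combination h5
  obtain ⟨G1, G2, G3, G4⟩ := key_scalar (A 0 0) (A 0 1) (A 1 0) (A 1 1)
    (B 0 0) (B 0 1) (B 1 0) (B 1 1) e1 e2 e3 e4 e5
  ext i j
  fin_cases i <;> fin_cases j <;>
    simp only [Matrix.mul_apply, Fin.sum_univ_two] <;>
    [exact G1; exact G2; exact G3; exact G4]

/-- Let `Γ` act on the torus `A = ℂ²/Λ` by automorphisms induced by affine maps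
`z ↦ L g z + T g` with `L g` preserving the lattice `Λ`. If the action on `A` is free,
then `Γ` is solvable. -/
theorem solvable_of_free_action_on_torus_dim_two (Γ : Type*) [Group Γ]
    (Λ : AddSubgroup (Fin 2 → ℂ))
    (L : Γ → ((Fin 2 → ℂ) ≃ₗ[ℂ] (Fin 2 → ℂ))) (T : Γ → (Fin 2 → ℂ))
    (hmul : ∀ g h : Γ, ∀ v, L (g * h) v = L g (L h v))
    (hT : ∀ g h : Γ, T (g * h) = L g (T h) + T g)
    (hone : ∀ v, L 1 v = v) (hTone : T 1 = 0)
    (hΛ : ∀ g : Γ, ∀ v ∈ Λ, L g v ∈ Λ)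
    (hfree : ∀ g : Γ, g ≠ 1 → ∀ z : Fin 2 → ℂ, L g z + T g - z ∉ Λ) :
    IsSolvable Γ := by
  classical
  -- matrices of the linear parts
  set Mg : Γ → Matrix (Fin 2) (Fin 2) ℂ :=
    fun g => LinearMap.toMatrix' ((L g).toLinearMap) with hMg
  have hMapply : ∀ (g : Γ) (v : Fin 2 → ℂ), (Mg g).mulVec v = L g v := by
    intro g v
    rw [hMg, ← Matrix.toLin'_apply, Matrix.toLin'_toMatrix']
    rfl
  have hMmul : ∀ g h : Γ, Mg (g * h) = Mg g * Mg h := by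
    intro g h
    have : (L (g * h)).toLinearMap = (L g).toLinearMap ∘ₗ (L h).toLinearMap :=
      LinearMap.ext fun v => hmul g h v
    simp only [hMg]
    rw [this, LinearMap.toMatrix'_comp]
  have hMone : Mg 1 = 1 := by
    have : (L (1 : Γ)).toLinearMap = LinearMap.id := LinearMap.ext fun v => hone v
    simp only [hMg]
    rw [this, LinearMap.toMatrix'_id]
  have hMdet : ∀ g : Γ, (Mg g).det * (Mg g⁻¹).det = 1 := by
    intro g
    rw [← Matrix.det_mul, ← hMmul, mul_inv_cancel, hMone, Matrix.det_one]
  -- freeness gives det (Mg g - 1) = 0 for all g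
  have hdet0 : ∀ g : Γ, (Mg g - 1).det = 0 := by
    intro g
    by_cases hg : g = 1
    · subst hg; rw [hMone]; simp
    · by_contra hdet
      have hunit : IsUnit (Mg g - 1).det := isUnit_iff_ne_zero.mpr hdet
      set z : Fin 2 → ℂ := (Mg g - 1)⁻¹.mulVec (-(T g)) with hz
      refine hfree g hg z ?_
      have h1 : (Mg g - 1).mulVec z = -(T g) := by
        rw [hz, Matrix.mulVec_mulVec, Matrix.mul_nonsing_inv _ hunit, Matrix.one_mulVec]
      have h2 : (Mg g - 1).mulVec z = L g z - z := by
        rw [Matrix.sub_mulVec, Matrix.one_mulVec, hMapply]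
      have h3 : L g z + T g - z = 0 := by
        have := h2.symm.trans h1
        linear_combination (norm := module) this
      rw [h3]; exact Λ.zero_mem
  -- injectivity of the affine realization
  have hinj : ∀ g : Γ, (∀ v, L g v = v) → T g = 0 → g = 1 := by
    intro g hLg hTg
    by_contra hg
    refine hfree g hg 0 ?_
    rw [hLg 0, hTg]
    simpa using Λ.zero_mem
  have hLinv : ∀ n : Γ, (∀ v, L n v = v) → ∀ v, L n⁻¹ v = v := by
    intro n hn v
    have h1 : L n (L n⁻¹ v) = v := by
      rw [← hmul, mul_inv_cancel, hone]
    have h2 : L n (L n⁻¹ v) = L n⁻¹ v := hn _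
    exact h2.symm.trans h1
  have hTinv : ∀ n : Γ, T n⁻¹ = -(L n⁻¹ (T n)) := by
    intro n
    have := hT n⁻¹ n
    rw [inv_mul_cancel, hTone] at this
    linear_combination (norm := module) -this
  -- elements whose linear part is the identity commute
  have hGcomm : ∀ g h : Γ, (∀ v, L g v = v) → (∀ v, L h v = v) → g * h = h * g := by
    intro g h hg hh
    have h1 : ∀ v, L (g * h) v = v := fun v => by rw [hmul, hh, hg]
    have h2 : ∀ v, L (h * g) v = v := fun v => by rw [hmul, hg, hh]
    have h3 : ∀ v, L ((h * g)⁻¹) v = v := hLinv _ h2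
    have h4 : ∀ v, L (g * h * (h * g)⁻¹) v = v := fun v => by rw [hmul, h3, h1]
    have h5 : T ((h * g)⁻¹) = -(T (h * g)) := by
      rw [hTinv, h3]
    have h6 : T (g * h * (h * g)⁻¹) = 0 := by
      rw [hT, h1, h5, hT, hT, hg, hh]
      abel
    exact mul_inv_eq_one.mp (hinj _ h4 h6)
  -- determinant homomorphism to ℂˣ
  set ψ : Γ →* ℂˣ := MonoidHom.mk'
    (fun g => Units.mk ((Mg g).det) ((Mg g⁻¹).det) (hMdet g)
      (by rw [mul_comm]; exact hMdet g))
    (fun g h => Units.ext (by simp only [Units.val_mk, Units.val_mul, hMmul,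
      Matrix.det_mul])) with hψ
  set K : Subgroup Γ := ψ.ker with hK
  -- the hom from K to units of matrices
  set θ : K →* (Matrix (Fin 2) (Fin 2) ℂ)ˣ := MonoidHom.mk'
    (fun k => Units.mk (Mg (k : Γ)) (Mg ((k : Γ)⁻¹))
      (by rw [← hMmul, mul_inv_cancel, hMone])
      (by rw [← hMmul, inv_mul_cancel, hMone]))
    (fun k l => Units.ext (by
      simp only [Units.val_mk, Units.val_mul, Subgroup.coe_mul, hMmul])) with hθ
  have hKdet : ∀ k : K, (Mg (k : Γ)).det = 1 := by
    intro k
    have hk : ψ (k : Γ) = 1 := k.2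
    exact congrArg Units.val hk
  have hcommM : ∀ k l : K, Mg (k : Γ) * Mg (l : Γ) = Mg (l : Γ) * Mg (k : Γ) := by
    intro k l
    refine mat_comm _ _ (hKdet k) (hdet0 _) (hKdet l) (hdet0 _) ?_
    rw [← hMmul]
    exact hdet0 ((k : Γ) * (l : Γ))
  haveI hrange : IsSolvable θ.range := by
    refine isSolvable_of_comm ?_
    rintro ⟨x, k, rfl⟩ ⟨y, l, rfl⟩
    refine Subtype.ext (Units.ext ?_)
    have : Mg ((k : Γ) * (l : Γ)) = Mg ((l : Γ) * (k : Γ)) := by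
      rw [hMmul, hMmul, hcommM]
    simpa only [Subgroup.coe_mul, Units.val_mul] using (hMmul _ _ ▸ hcommM k l)
  haveI hker : IsSolvable θ.ker := by
    refine isSolvable_of_comm ?_
    intro x y
    have hx : ∀ v, L ((x : K) : Γ) v = v := by
      intro v
      have h1 : θ (x : K) = 1 := x.2
      have h2 : Mg ((x : K) : Γ) = 1 := congrArg Units.val h1
      rw [← hMapply, h2, Matrix.one_mulVec]
    have hy : ∀ v, L ((y : K) : Γ) v = v := by
      intro v
      have h1 : θ (y : K) = 1 := y.2
      have h2 : Mg ((y : K) : Γ) = 1 := congrArg Units.val h1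
      rw [← hMapply, h2, Matrix.one_mulVec]
    exact Subtype.ext (Subtype.ext (hGcomm _ _ hx hy))
  haveI hKsolv : IsSolvable K := by
    refine solvable_of_ker_le_range θ.ker.subtype θ.rangeRestrict ?_ (hG' := hker) (hG'' := hrange)
    rw [MonoidHom.ker_rangeRestrict, Subgroup.range_subtype]
  refine solvable_of_ker_le_range K.subtype ψ ?_ (hG' := hKsolv) (hG'' := inferInstance)
  rw [Subgroup.range_subtype]
end

section
/- Let F be a holomorphic automorphism of H × C, where H is the upper half-plane. Then F preserves the projection to H: F(z,w) = (u(z), a(z)w + b(z)) where u is a holomorphic automorphism of H and a, b are holomorphic functions on H with a nowhere vanishing. -/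
open Set

section Aux

open Filter Polynomial Bornology Topology

private lemma halfplane_liouville' {f : ℂ → ℂ} (hf : Differentiable ℂ f)
    (him : ∀ w, 0 < (f w).im) : ∀ w, f w = f 0 := by
  have hden : ∀ w, f w + Complex.I ≠ 0 := by
    intro w h
    have h2 : (f w).im + 1 = 0 := by
      have := congrArg Complex.im h
      simpa using this
    linarith [him w]
  set g : ℂ → ℂ := fun w => (f w - Complex.I) / (f w + Complex.I) with hgdef
  have hg : Differentiable ℂ g := (hf.sub_const _).div (hf.add_const _) hden
  have hb : ∀ w, ‖g w‖ < 1 := by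
    intro w
    have h1 : Complex.normSq (f w - Complex.I) < Complex.normSq (f w + Complex.I) := by
      simp only [Complex.normSq_apply, Complex.sub_re, Complex.sub_im, Complex.add_re,
        Complex.add_im, Complex.I_re, Complex.I_im]
      nlinarith [him w]
    have h2 : 0 < ‖f w + Complex.I‖ := by
      simpa using (norm_pos_iff.mpr (hden w))
    rw [hgdef]
    simp only [norm_div]
    rw [div_lt_one h2]
    have := Complex.sq_norm (f w - Complex.I)
    have := Complex.sq_norm (f w + Complex.I)
    nlinarith [norm_nonneg (f w - Complex.I), norm_nonneg (f w + Complex.I)]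
  have hbd : Bornology.IsBounded (Set.range g) := by
    apply Bornology.IsBounded.subset (Metric.isBounded_ball (x := (0:ℂ)) (r := 1))
    rintro _ ⟨w, rfl⟩
    simpa [Complex.dist_eq] using hb w
  obtain ⟨c, hc⟩ := hg.exists_eq_const_of_bounded hbd
  intro w
  have hw : g w = g 0 := by rw [hc]; rfl
  have h1 := hden w
  have h0 := hden 0
  rw [hgdef] at hw
  simp only at hw
  field_simp at hw
  have hI : (Complex.I : ℂ) ≠ 0 := Complex.I_ne_zero
  have key : (2 * Complex.I) * (f w) = (2 * Complex.I) * (f 0) := by linear_combination hw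
  exact mul_left_cancel₀ (by simp [hI] : (2:ℂ) * Complex.I ≠ 0) key

private lemma poly_of_growth' : ∀ (n : ℕ) (f : ℂ → ℂ), Differentiable ℂ f →
    (∃ C R : ℝ, ∀ z : ℂ, R ≤ ‖z‖ → ‖f z‖ ≤ C * ‖z‖ ^ n) →
    ∃ p : Polynomial ℂ, p.natDegree ≤ n ∧ ∀ z, f z = p.eval z := by
  intro n
  induction n with
  | zero =>
    rintro f hf ⟨C, R, hCR⟩
    have hbd : Bornology.IsBounded (Set.range f) := by
      have h1 : Set.range f ⊆ f '' (Metric.closedBall 0 (max R 0)) ∪ Metric.closedBall 0 C := by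
        rintro _ ⟨z, rfl⟩
        rcases le_or_gt R ‖z‖ with h | h
        · right
          rw [Metric.mem_closedBall, dist_zero_right]
          simpa using hCR z h
        · left
          exact ⟨z, by rw [Metric.mem_closedBall, dist_zero_right]; exact
            le_max_of_le_left h.le, rfl⟩
      exact Bornology.IsBounded.subset
        (((isCompact_closedBall (0:ℂ) _).image hf.continuous).isBounded.union
          Metric.isBounded_closedBall) h1
    obtain ⟨c, hc⟩ := hf.exists_eq_const_of_bounded hbd
    exact ⟨Polynomial.C c, by simp, fun z => by rw [hc]; simp⟩
  | succ n ih =>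
    rintro f hf ⟨C, R, hCR⟩
    set f₁ : ℂ → ℂ := dslope f 0 with hf₁def
    have hf₁ : Differentiable ℂ f₁ := by
      rw [← differentiableOn_univ]
      exact (Complex.differentiableOn_dslope (univ_mem)).2 hf.differentiableOn
    have hb₁ : ∃ C' R' : ℝ, ∀ z : ℂ, R' ≤ ‖z‖ → ‖f₁ z‖ ≤ C' * ‖z‖ ^ n := by
      refine ⟨C + ‖f 0‖, max (max R 1) 1, fun z hz => ?_⟩
      have hz1 : (1:ℝ) ≤ ‖z‖ := le_trans (le_max_right _ _) hz
      have hzR : R ≤ ‖z‖ := le_trans ((le_max_left R 1).trans (le_max_left _ _)) hz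
      have hz0 : z ≠ 0 := by
        intro h; rw [h] at hz1; simp at hz1; linarith
      have hfz : ‖f z - f 0‖ ≤ (C + ‖f 0‖) * ‖z‖ ^ (n + 1) := by
        calc ‖f z - f 0‖ ≤ ‖f z‖ + ‖f 0‖ := norm_sub_le _ _
          _ ≤ C * ‖z‖ ^ (n+1) + ‖f 0‖ * ‖z‖ ^ (n+1) := by
              have h1 : (1:ℝ) ≤ ‖z‖ ^ (n+1) := one_le_pow₀ hz1
              have h2 : ‖f 0‖ ≤ ‖f 0‖ * ‖z‖ ^ (n+1) := by
                nlinarith [norm_nonneg (f 0)]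
              linarith [hCR z hzR]
          _ = (C + ‖f 0‖) * ‖z‖ ^ (n+1) := by ring
      have heq : ‖f₁ z‖ = ‖f z - f 0‖ / ‖z‖ := by
        rw [hf₁def, dslope_of_ne f hz0, slope_def_field]
        rw [div_eq_mul_inv, sub_zero, norm_mul, norm_inv]
        ring
      rw [heq]
      rw [div_le_iff₀ (by linarith : (0:ℝ) < ‖z‖)]
      calc ‖f z - f 0‖ ≤ (C + ‖f 0‖) * ‖z‖ ^ (n + 1) := hfz
        _ = (C + ‖f 0‖) * ‖z‖ ^ n * ‖z‖ := by ring
    obtain ⟨p₁, hp₁deg, hp₁⟩ := ih f₁ hf₁ hb₁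
    refine ⟨Polynomial.C (f 0) + Polynomial.X * p₁, ?_, fun z => ?_⟩
    · refine le_trans (Polynomial.natDegree_add_le _ _) ?_
      simp only [Polynomial.natDegree_C, max_le_iff]
      constructor
      · omega
      · exact le_trans (Polynomial.natDegree_mul_le) (by simp; omega)
    · have := sub_smul_dslope f 0 z
      simp only [sub_zero, smul_eq_mul] at this
      have hfz : f z = f 0 + z * f₁ z := by rw [hf₁def]; linear_combination -this
      rw [hfz, hp₁ z]
      simp only [Polynomial.eval_add, Polynomial.eval_mul, Polynomial.eval_C, Polynomial.eval_X]

private lemma affine_of_inverse_aux' {f g : ℂ → ℂ} (hf : Differentiable ℂ f)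
    (hg : Differentiable ℂ g)
    (hgf : ∀ w, g (f w) = w) (hfg : ∀ ζ, f (g ζ) = ζ) (hf0 : f 0 = 0) :
    ∃ a b : ℂ, a ≠ 0 ∧ ∀ w, f w = a * w + b := by
  -- f is a homeomorphism
  let e : ℂ ≃ₜ ℂ :=
    { toFun := f, invFun := g, left_inv := hgf, right_inv := hfg,
      continuous_toFun := hf.continuous, continuous_invFun := hg.continuous }
  have hten : Tendsto f (cobounded ℂ) (cobounded ℂ) := by
    rw [Metric.cobounded_eq_cocompact]
    exact (e.map_cocompact).le
  -- f vanishes only at 0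
  have hfne : ∀ w : ℂ, w ≠ 0 → f w ≠ 0 := by
    intro w hw hfw
    refine hw ?_
    calc w = g (f w) := (hgf w).symm
      _ = g (f 0) := by rw [hfw, hf0]
      _ = 0 := hgf 0
  -- the auxiliary function h
  classical
  set h : ℂ → ℂ := fun w => if w = 0 then 0 else (f w⁻¹)⁻¹ with hhdef
  have hh_ne : ∀ w : ℂ, w ≠ 0 → h w = (f w⁻¹)⁻¹ := fun w hw => by
    rw [hhdef]; simp [hw]
  have hh0 : h 0 = 0 := by rw [hhdef]; simp
  have hhnz : ∀ w : ℂ, w ≠ 0 → h w ≠ 0 := by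
    intro w hw
    rw [hh_ne w hw]
    exact inv_ne_zero (hfne _ (inv_ne_zero hw))
  have hhd : ∀ w : ℂ, w ≠ 0 → DifferentiableAt ℂ h w := by
    intro w hw
    have h1 : DifferentiableAt ℂ (fun w => (f w⁻¹)⁻¹) w := by
      refine DifferentiableAt.inv ?_ (hfne w⁻¹ (inv_ne_zero hw))
      exact (hf _).comp w (differentiableAt_inv hw)
    refine h1.congr_of_eventuallyEq ?_
    filter_upwards [isOpen_ne.mem_nhds hw] with x hx
    exact hh_ne x hx
  have hcont : ContinuousAt h 0 := by
    unfold ContinuousAt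
    rw [hh0]
    have t1 : Tendsto h (𝓝[≠] 0) (𝓝 0) := by
      have h1 : Tendsto (fun w : ℂ => (f w⁻¹)⁻¹) (𝓝[≠] 0) (𝓝 0) := by
        refine tendsto_inv₀_cobounded.comp ?_
        exact hten.comp tendsto_inv₀_nhdsNE_zero
      refine h1.congr' ?_
      filter_upwards [self_mem_nhdsWithin] with x hx
      exact (hh_ne x hx).symm
    have t2 : Tendsto h (pure 0) (𝓝 0) := by
      simpa [hh0] using tendsto_pure_nhds h 0
    have t3 := t1.sup t2
    rwa [nhdsNE_sup_pure] at t3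
  have han : AnalyticAt ℂ h 0 := by
    apply Complex.analyticAt_of_differentiable_on_punctured_nhds_of_continuousAt _ hcont
    filter_upwards [self_mem_nhdsWithin] with x hx
    exact hhd x hx
  -- h has finite order at 0
  have hne_top : analyticOrderAt h 0 ≠ ⊤ := by
    intro htop
    have hev := analyticOrderAt_eq_top.mp htop
    have hev' : ∀ᶠ z in 𝓝[≠] (0:ℂ), h z = 0 := hev.filter_mono nhdsWithin_le_nhds
    obtain ⟨z, hz1, hz2⟩ := (hev'.and eventually_mem_nhdsWithin).exists
    exact hhnz z hz2 hz1
  obtain ⟨n, hn⟩ := ENat.ne_top_iff_exists.mp hne_top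
  obtain ⟨g₀, hg₀an, hg₀0, hg₀ev⟩ := (han.analyticOrderAt_eq_natCast (n := n)).1 hn.symm
  -- lower bound for ‖g₀‖ near 0
  have hg₀c : ∀ᶠ z in 𝓝 (0:ℂ), ‖g₀ 0‖ / 2 ≤ ‖g₀ z‖ := by
    have hcg : ContinuousAt g₀ 0 := hg₀an.continuousAt
    have hnc : Tendsto (fun z => ‖g₀ z‖) (𝓝 0) (𝓝 ‖g₀ 0‖) := hcg.norm
    have hlt : ‖g₀ 0‖ / 2 < ‖g₀ 0‖ := by
      have : 0 < ‖g₀ 0‖ := norm_pos_iff.2 hg₀0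
      linarith
    exact hnc.eventually (eventually_ge_nhds hlt)
  set c : ℝ := ‖g₀ 0‖ / 2 with hcdef
  have hcpos : 0 < c := by
    have : 0 < ‖g₀ 0‖ := norm_pos_iff.2 hg₀0
    rw [hcdef]; linarith
  -- get a ball where both the factorization and the lower bound hold
  obtain ⟨ε, hε, hball⟩ := Metric.eventually_nhds_iff.mp (hg₀ev.and hg₀c)
  -- growth bound for f
  have hgrow : ∃ C R : ℝ, ∀ ζ : ℂ, R ≤ ‖ζ‖ → ‖f ζ‖ ≤ C * ‖ζ‖ ^ n := by
    refine ⟨c⁻¹, 2 / ε + 1, fun ζ hζ => ?_⟩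
    have hζpos : 0 < ‖ζ‖ := by
      have : 0 < 2 / ε + 1 := by positivity
      linarith
    have hζ0 : ζ ≠ 0 := norm_pos_iff.mp hζpos
    set z : ℂ := ζ⁻¹ with hzdef
    have hz0 : z ≠ 0 := inv_ne_zero hζ0
    have hzn : ‖z‖ < ε := by
      rw [hzdef, norm_inv]
      rw [inv_lt_comm₀ hζpos hε]
      calc ε⁻¹ < 2/ε + 1 := by
            rw [div_eq_mul_inv]
            nlinarith [inv_pos.mpr hε]
        _ ≤ ‖ζ‖ := hζ
    have hdist : dist z 0 < ε := by rwa [dist_zero_right]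
    obtain ⟨hfac, hlow⟩ := hball hdist
    have hzinv : z⁻¹ = ζ := by rw [hzdef, inv_inv]
    have hhz : h z = (f ζ)⁻¹ := by rw [hh_ne z hz0, hzinv]
    have hfζ : f ζ = (h z)⁻¹ := by rw [hhz, inv_inv]
    have hnorm : ‖h z‖ = ‖z‖ ^ n * ‖g₀ z‖ := by
      rw [hfac, smul_eq_mul, norm_mul, norm_pow, sub_zero]
    have hlb : c * ‖z‖ ^ n ≤ ‖h z‖ := by
      rw [hnorm]
      have : 0 ≤ ‖z‖ ^ n := by positivity
      nlinarith
    have hznorm : 0 < ‖z‖ := norm_pos_iff.mpr hz0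
    have hlbpos : 0 < c * ‖z‖ ^ n := by positivity
    rw [hfζ, norm_inv]
    rw [inv_le_comm₀ (lt_of_lt_of_le hlbpos hlb) (by positivity)]
    calc (c⁻¹ * ‖ζ‖ ^ n)⁻¹ = c * (‖ζ‖ ^ n)⁻¹ := by
          rw [mul_inv, inv_inv]
      _ = c * ‖z‖ ^ n := by
          rw [hzdef, norm_inv, inv_pow]
      _ ≤ ‖h z‖ := hlb
  -- f is a polynomial
  obtain ⟨p, hpdeg, hp⟩ := poly_of_growth' n f hf hgrow
  -- the derivative of f never vanishes
  have hderiv : ∀ w : ℂ, deriv f w ≠ 0 := by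
    intro w
    have h1 : HasDerivAt f (deriv f w) w := (hf w).hasDerivAt
    have h2 : HasDerivAt g (deriv g (f w)) (f w) := (hg (f w)).hasDerivAt
    have h3 : HasDerivAt (g ∘ f) (deriv g (f w) * deriv f w) w := h2.comp w h1
    have h4 : (g ∘ f) = id := by funext x; exact hgf x
    rw [h4] at h3
    have h5 : deriv g (f w) * deriv f w = 1 := h3.unique (hasDerivAt_id w)
    intro h0
    rw [h0, mul_zero] at h5
    exact zero_ne_one h5
  -- the polynomial has degree ≤ 1
  have hpd1 : p.natDegree ≤ 1 := by
    by_contra hcon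
    push_neg at hcon
    have hd2 : 2 ≤ p.natDegree := hcon
    have hp0 : p ≠ 0 := by
      intro h0
      rw [h0] at hd2; simp at hd2
    have hcoef : (derivative p).coeff (p.natDegree - 1) ≠ 0 := by
      rw [Polynomial.coeff_derivative]
      have h1 : p.natDegree - 1 + 1 = p.natDegree := by omega
      rw [h1]
      apply mul_ne_zero (Polynomial.leadingCoeff_ne_zero.mpr hp0)
      have h3 : (p.natDegree - 1 : ℕ) + 1 ≠ 0 := by omega
      have h2 : ((p.natDegree - 1 : ℕ) + 1 : ℂ) ≠ 0 := by exact_mod_cast h3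
      exact h2
    have hdegge : 1 ≤ (derivative p).natDegree := by
      have := Polynomial.le_natDegree_of_ne_zero hcoef
      omega
    have hdp0 : derivative p ≠ 0 := by
      intro h0
      rw [h0] at hdegge; simp at hdegge
    have hdegpos : 0 < (derivative p).degree := by
      rw [Polynomial.degree_eq_natDegree hdp0]
      exact_mod_cast hdegge
    obtain ⟨x, hx⟩ := Complex.exists_root hdegpos
    have hdx : deriv f x = (derivative p).eval x := by
      have : deriv f x = deriv (fun y => p.eval y) x := by
        congr 1
        funext y
        exact hp y
      rw [this, Polynomial.deriv]
    rw [Polynomial.IsRoot] at hx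
    exact hderiv x (by rw [hdx, hx])
  -- conclude
  have hrep := Polynomial.eq_X_add_C_of_natDegree_le_one hpd1
  refine ⟨p.coeff 1, p.coeff 0, ?_, fun w => ?_⟩
  · intro h0
    have h01 : f 1 = f 0 := by
      rw [hp 1, hp 0]
      conv_lhs => rw [hrep]
      conv_rhs => rw [hrep]
      simp [h0]
    have : (1 : ℂ) = 0 := by
      calc (1:ℂ) = g (f 1) := (hgf 1).symm
        _ = g (f 0) := by rw [h01]
        _ = 0 := hgf 0
    exact one_ne_zero this
  · rw [hp w]
    conv_lhs => rw [hrep]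
    simp

private lemma affine_of_inverse' {f g : ℂ → ℂ} (hf : Differentiable ℂ f)
    (hg : Differentiable ℂ g)
    (hgf : ∀ w, g (f w) = w) (hfg : ∀ ζ, f (g ζ) = ζ) :
    ∃ a b : ℂ, a ≠ 0 ∧ ∀ w, f w = a * w + b := by
  set w₀ : ℂ := g 0 with hw₀
  obtain ⟨a, b, ha, hab⟩ := affine_of_inverse_aux'
    (f := fun w => f (w + w₀)) (g := fun ζ => g ζ - w₀)
    (hf.comp (differentiable_id.add_const _)) (hg.sub_const _)
    (fun w => by simp [hgf])
    (fun ζ => by show f (g ζ - w₀ + w₀) = ζ; rw [sub_add_cancel, hfg])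
    (by simp [hw₀, hfg])
  refine ⟨a, b - a * w₀, ha, fun w => ?_⟩
  have h1 := hab (w - w₀)
  simp only [sub_add_cancel] at h1
  rw [h1]; ring

end Aux

/-- Every holomorphic automorphism `F` of `ℍ × ℂ` (with holomorphic inverse `G`) preserves
the projection to the upper half-plane `ℍ`: it has the form
`F(z,w) = (u z, a z * w + b z)` with `u` a holomorphic automorphism of `ℍ` and `a`, `b`
holomorphic on `ℍ`, `a` nowhere vanishing. -/
theorem automorphism_of_H_times_C (F G : ℂ × ℂ → ℂ × ℂ)
    (H : Set ℂ) (hH : H = {z : ℂ | 0 < z.im})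
    (S : Set (ℂ × ℂ)) (hS : S = H ×ˢ (univ : Set ℂ))
    (hF : DifferentiableOn ℂ F S) (hG : DifferentiableOn ℂ G S)
    (hFS : MapsTo F S S) (hGS : MapsTo G S S)
    (hGF : ∀ p ∈ S, G (F p) = p) (hFG : ∀ p ∈ S, F (G p) = p) :
    ∃ u a b : ℂ → ℂ, DifferentiableOn ℂ u H ∧ DifferentiableOn ℂ a H ∧
      DifferentiableOn ℂ b H ∧ (∀ z ∈ H, a z ≠ 0) ∧ BijOn u H H ∧
      ∀ z ∈ H, ∀ w : ℂ, F (z, w) = (u z, a z * w + b z) := by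
  have hHopen : IsOpen H := by
    rw [hH]; exact isOpen_lt continuous_const Complex.continuous_im
  have hSopen : IsOpen S := by rw [hS]; exact hHopen.prod isOpen_univ
  have hmem : ∀ z ∈ H, ∀ w : ℂ, (z, w) ∈ S := fun z hz w => by
    rw [hS]; exact ⟨hz, trivial⟩
  -- the first coordinate of any such map is fiberwise constant (Liouville)
  have hkey : ∀ (Φ : ℂ × ℂ → ℂ × ℂ), DifferentiableOn ℂ Φ S → MapsTo Φ S S →
      ∀ z ∈ H, ∀ w : ℂ, (Φ (z, w)).1 = (Φ (z, 0)).1 := by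
    intro Φ hΦ hΦS z hz w
    have hdiff : Differentiable ℂ (fun w : ℂ => (Φ (z, w)).1) := by
      intro w'
      have h1 : DifferentiableAt ℂ Φ (z, w') :=
        hΦ.differentiableAt (hSopen.mem_nhds (hmem z hz w'))
      have h2 : DifferentiableAt ℂ (fun w : ℂ => ((z, w) : ℂ × ℂ)) w' :=
        (differentiableAt_const _).prodMk differentiableAt_id
      exact differentiableAt_fst.comp w' (h1.comp w' h2)
    have him : ∀ w : ℂ, 0 < ((Φ (z, w)).1).im := by
      intro w'
      have h1 := hΦS (hmem z hz w')
      rw [hS] at h1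
      have h2 : (Φ (z, w')).1 ∈ H := h1.1
      rw [hH] at h2
      exact h2
    exact halfplane_liouville' hdiff him w
  -- fiberwise differentiability in `w`
  have hfiber : ∀ (Φ : ℂ × ℂ → ℂ × ℂ), DifferentiableOn ℂ Φ S →
      ∀ z ∈ H, Differentiable ℂ (fun w : ℂ => (Φ (z, w)).2) := by
    intro Φ hΦ z hz w'
    have h1 : DifferentiableAt ℂ Φ (z, w') :=
      hΦ.differentiableAt (hSopen.mem_nhds (hmem z hz w'))
    have h2 : DifferentiableAt ℂ (fun w : ℂ => ((z, w) : ℂ × ℂ)) w' :=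
      (differentiableAt_const _).prodMk differentiableAt_id
    exact differentiableAt_snd.comp w' (h1.comp w' h2)
  -- definitions
  set u : ℂ → ℂ := fun z => (F (z, 0)).1 with hu
  set b : ℂ → ℂ := fun z => (F (z, 0)).2 with hb
  set a : ℂ → ℂ := fun z => (F (z, 1)).2 - (F (z, 0)).2 with ha
  set v : ℂ → ℂ := fun ζ => (G (ζ, 0)).1 with hv
  -- differentiability of slices
  have hslice : ∀ (Φ : ℂ × ℂ → ℂ × ℂ), DifferentiableOn ℂ Φ S → ∀ c : ℂ,
      DifferentiableOn ℂ (fun z => Φ (z, c)) H := by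
    intro Φ hΦ c
    apply hΦ.comp
    · exact (differentiable_id.prodMk (differentiable_const c)).differentiableOn
    · intro z hz
      exact hmem z hz c
  have hud : DifferentiableOn ℂ u H :=
    differentiable_fst.comp_differentiableOn (hslice F hF 0)
  have hbd : DifferentiableOn ℂ b H :=
    differentiable_snd.comp_differentiableOn (hslice F hF 0)
  have had : DifferentiableOn ℂ a H :=
    (differentiable_snd.comp_differentiableOn (hslice F hF 1)).sub
      (differentiable_snd.comp_differentiableOn (hslice F hF 0))
  -- u maps H to H, v maps H to H
  have humem : ∀ z ∈ H, u z ∈ H := by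
    intro z hz
    have h1 := hFS (hmem z hz 0)
    rw [hS] at h1
    exact h1.1
  have hvmem : ∀ ζ ∈ H, v ζ ∈ H := by
    intro ζ hζ
    have h1 := hGS (hmem ζ hζ 0)
    rw [hS] at h1
    exact h1.1
  -- F (z, w) = (u z, (F (z,w)).2)
  have hFzw : ∀ z ∈ H, ∀ w : ℂ, F (z, w) = (u z, (F (z, w)).2) := by
    intro z hz w
    exact Prod.ext (hkey F hF hFS z hz w) rfl
  -- (G (u z, ζ)).1 = z for all ζ
  have hGconst : ∀ z ∈ H, ∀ ζ : ℂ, (G (u z, ζ)).1 = z := by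
    intro z hz ζ
    have h1 := hkey G hG hGS (u z) (humem z hz)
    have h2 : G (u z, (F (z, 0)).2) = (z, 0) := by
      rw [← hFzw z hz 0]
      exact hGF _ (hmem z hz 0)
    rw [h1 ζ, ← h1 ((F (z, 0)).2), h2]
  -- main fiberwise statement
  have main : ∀ z ∈ H, (∀ w : ℂ, F (z, w) = (u z, a z * w + b z)) ∧ a z ≠ 0 := by
    intro z hz
    set f : ℂ → ℂ := fun w => (F (z, w)).2 with hf'
    set g : ℂ → ℂ := fun ζ => (G (u z, ζ)).2 with hg'
    have hfd : Differentiable ℂ f := hfiber F hF z hz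
    have hgd : Differentiable ℂ g := hfiber G hG (u z) (humem z hz)
    have hgf : ∀ w, g (f w) = w := by
      intro w
      have h1 : G (u z, f w) = (z, w) := by
        rw [← hFzw z hz w]
        exact hGF _ (hmem z hz w)
      exact congrArg Prod.snd h1
    have hfg : ∀ ζ, f (g ζ) = ζ := by
      intro ζ
      have hGm : G (u z, ζ) = (z, g ζ) := Prod.ext (hGconst z hz ζ) rfl
      have h1 : F (z, g ζ) = (u z, ζ) := by
        rw [← hGm]
        exact hFG _ (hmem (u z) (humem z hz) ζ)
      exact congrArg Prod.snd h1
    obtain ⟨a₀, b₀, ha₀, hab₀⟩ := affine_of_inverse' hfd hgd hgf hfg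
    have haz : a z = a₀ := by
      show (F (z, 1)).2 - (F (z, 0)).2 = a₀
      have h1 := hab₀ 1
      have h0 := hab₀ 0
      rw [hf'] at h1 h0
      simp only at h1 h0
      rw [h1, h0]; ring
    have hbz : b z = b₀ := by
      show (F (z, 0)).2 = b₀
      have h0 := hab₀ 0
      rw [hf'] at h0
      simp only at h0
      rw [h0]; ring
    constructor
    · intro w
      rw [hFzw z hz w]
      have := hab₀ w
      rw [hf'] at this
      simp only at this
      rw [this, haz, hbz]
    · rw [haz]; exact ha₀
  -- bijectivity of u
  have hbij : BijOn u H H := by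
    have hvleft : ∀ z ∈ H, v (u z) = z := by
      intro z hz
      rw [hv]
      exact hGconst z hz 0
    have huright : ∀ ζ ∈ H, u (v ζ) = ζ := by
      intro ζ hζ
      have h1 : G (ζ, 0) = (v ζ, (G (ζ, 0)).2) := Prod.ext rfl rfl
      have h2 : F (G (ζ, 0)) = (ζ, 0) := hFG _ (hmem ζ hζ 0)
      have h3 : (F (v ζ, (G (ζ, 0)).2)).1 = ζ := by
        rw [← h1, h2]
      have h4 := hkey F hF hFS (v ζ) (hvmem ζ hζ) ((G (ζ, 0)).2)
      show (F (v ζ, 0)).1 = ζ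
      rw [← h4, h3]
    exact InvOn.bijOn ⟨hvleft, huright⟩ (fun z hz => humem z hz) (fun ζ hζ => hvmem ζ hζ)
  exact ⟨u, a, b, hud, had, hbd, fun z hz => (main z hz).2, hbij,
    fun z hz w => (main z hz).1 w⟩
end
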